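/- Let k be a natural number. The separating variety V_sep is connected in codimension k if and only if X is connected in codimension k and G is generated by k-reflections. -/

import Mathlib

open TopologicalSpace

/-- The chain-theoretic codimension of `A` inside `Y`: the infimum, over all
irreducible closed subsets `Z` of `Y` contained in `A`, of the coheight of `Z`
in the poset of irreducible closed subsets of `Y`. -/
noncomputable def codimIn {α : Type*} [TopologicalSpace α] (Y A : Set α) : ℕ∞ :=
  ⨅ (Z : IrreducibleCloseds ↥Y) (_ : (Z : Set ↥Y) ⊆ (Subtype.val ⁻¹' A)), Order.coheight Z

/-- `Y` is connected in codimension `k`: removing any closed subset of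
codimension `> k` leaves a connected set. -/
def ConnectedInCodim {α : Type*} [TopologicalSpace α] (Y : Set α) (k : ℕ∞) : Prop :=
  ∀ A : Set α, IsClosed A → k < codimIn Y A → IsConnected (Y \ A)

/-- `Z` is an irreducible component of `Y` (a maximal irreducible subset of `Y`). -/
def IsIrredCompOf {α : Type*} [TopologicalSpace α] (Z Y : Set α) : Prop :=
  Maximal (fun S => S ⊆ Y ∧ IsIrreducible S) Z

variable {K : Type*} [Field K]

/-- The Zariski topology on affine space `σ → K`. -/
instance zariskiTopology (σ : Type*) : TopologicalSpace (σ → K) :=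
  .generateFrom {U | ∃ I : Ideal (MvPolynomial σ K), U = (MvPolynomial.zeroLocus K I)ᶜ}

variable {m : ℕ}

/-- `f : X → K` is a regular function on `X` (the restriction of a polynomial). -/
def IsRegularFn (X : Set (Fin m → K)) (f : ↥X → K) : Prop :=
  ∃ p : MvPolynomial (Fin m) K, ∀ x : ↥X, f x = MvPolynomial.eval (x : Fin m → K) p

variable (G : Type*) [Group G]

/-- The `G`-action on `X` is by morphisms (hence automorphisms) of varieties. -/
def IsRegularAction (X : Set (Fin m → K)) [MulAction G ↥X] : Prop :=
  ∀ (σ : G) (i : Fin m), IsRegularFn X (fun x => ((σ • x : ↥X) : Fin m → K) i)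

/-- `f : X → K` is a `G`-invariant function. -/
def IsInvariantFn (X : Set (Fin m → K)) [MulAction G ↥X] (f : ↥X → K) : Prop :=
  ∀ (σ : G) (x : ↥X), f (σ • x) = f x

/-- The separating variety `V_sep ⊆ X × X`, inside `K^m × K^m 'K^{m ⊕ m}`. -/
def sepVariety (X : Set (Fin m → K)) [MulAction G ↥X] : Set ((Fin m ⊕ Fin m) → K) :=
  {z | ∃ x y : ↥X, z = Sum.elim (x : Fin m → K) (y : Fin m → K) ∧
    ∀ f : ↥X → K, IsRegularFn X f → IsInvariantFn G X f → f x = f y}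

/-- `X × X` inside `K^{m ⊕ m}`. -/
def prodXX (X : Set (Fin m → K)) : Set ((Fin m ⊕ Fin m) → K) :=
  {z | ∃ x ∈ X, ∃ y ∈ X, z = Sum.elim x y}

/-- The graph `H_{σ,Y} = {(x, σx) | x ∈ Y}` of `σ` over a subset `Y ⊆ X`. -/
def graphComp (X : Set (Fin m → K)) [MulAction G ↥X] (σ : G) (Y : Set (Fin m → K)) :
    Set ((Fin m ⊕ Fin m) → K) :=
  {z | ∃ x : ↥X, (x : Fin m → K) ∈ Y ∧
    z = Sum.elim (x : Fin m → K) ((σ • x : ↥X) : Fin m → K)}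

/-- The fixed-point set `X^σ`, as a subset of the ambient affine space. -/
def fixedPts (X : Set (Fin m → K)) [MulAction G ↥X] (σ : G) : Set (Fin m → K) :=
  {v | ∃ h : v ∈ X, σ • (⟨v, h⟩ : ↥X) = ⟨v, h⟩}

/-- A set `S` of functions on `X` separates as well as all invariants do. -/
def IsSeparating (X : Set (Fin m → K)) [MulAction G ↥X] (S : Set (↥X → K)) : Prop :=
  ∀ x y : ↥X, (∃ f : ↥X → K, IsRegularFn X f ∧ IsInvariantFn G X f ∧ f x ≠ f y) →
    ∃ g ∈ S, g x ≠ g y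

/-- A regular (polynomial) map between algebraic sets. -/
def IsRegularMap {α β : Type*} (A : Set (α → K)) (B : Set (β → K)) (φ : ↥A → ↥B) : Prop :=
  ∀ j : β, ∃ p : MvPolynomial α K, ∀ x : ↥A, (φ x : β → K) j = MvPolynomial.eval (x : α → K) p

/-- Isomorphism of algebraic sets (mutually inverse regular maps). -/
def VarIso {α β : Type*} (A : Set (α → K)) (B : Set (β → K)) : Prop :=
  ∃ (φ : ↥A → ↥B) (ψ : ↥B → ↥A), IsRegularMap A B φ ∧ IsRegularMap B A ψ ∧
    Function.LeftInverse ψ φ ∧ Function.RightInverse ψ φ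


set_option linter.unusedSectionVars false
namespace SepAux
open MvPolynomial Set

theorem zeroLocus_inf {σ : Type*} (I J : Ideal (MvPolynomial σ K)) :
    MvPolynomial.zeroLocus K (I ⊓ J) = MvPolynomial.zeroLocus K I ∪ MvPolynomial.zeroLocus K J := by
  ext x
  simp only [Set.mem_union, MvPolynomial.mem_zeroLocus_iff]
  constructor
  · intro hx
    by_contra hx'
    push_neg at hx'
    obtain ⟨⟨p, hp, hp0⟩, ⟨q, hq, hq0⟩⟩ := hx'
    have hmem : p * q ∈ I ⊓ J := ⟨Ideal.mul_mem_right _ _ hp, Ideal.mul_mem_left _ _ hq⟩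
    have := hx _ hmem
    rw [map_mul] at this
    exact (mul_ne_zero hp0 hq0) this
  · rintro (hx | hx) <;> intro p hp
    · exact hx p hp.1
    · exact hx p hp.2

theorem zar_isOpen_iff {σ : Type*} {U : Set (σ → K)} :
    IsOpen U ↔ ∃ I : Ideal (MvPolynomial σ K), U = (MvPolynomial.zeroLocus K I)ᶜ := by
  constructor
  · intro h
    induction h with
    | basic u hu => exact hu
    | univ =>
        refine ⟨⊤, ?_⟩
        rw [MvPolynomial.zeroLocus_top]
        simp
    | inter u v _ _ hu hv =>
        obtain ⟨I, rfl⟩ := hu; obtain ⟨J, rfl⟩ := hv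
        exact ⟨I ⊓ J, by rw [zeroLocus_inf, Set.compl_union]⟩
    | sUnion s _ hs =>
        choose! I hI using hs
        refine ⟨Ideal.span (⋃ u ∈ s, ((I u : Ideal (MvPolynomial σ K)) : Set (MvPolynomial σ K))), ?_⟩
        ext x
        simp only [Set.mem_sUnion, Set.mem_compl_iff]
        rw [MvPolynomial.zeroLocus_span]
        simp only [Set.mem_setOf_eq, not_forall]
        constructor
        · rintro ⟨u, hu, hxu⟩
          rw [hI u hu] at hxu
          simp only [Set.mem_compl_iff, MvPolynomial.mem_zeroLocus_iff, not_forall] at hxu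
          obtain ⟨p, hp, hp0⟩ := hxu
          exact ⟨p, by simp only [Set.mem_iUnion]; exact ⟨u, hu, hp⟩, hp0⟩
        · rintro ⟨p, hp, hp0⟩
          simp only [Set.mem_iUnion] at hp
          obtain ⟨u, hu, hpu⟩ := hp
          refine ⟨u, hu, ?_⟩
          rw [hI u hu]
          simp only [Set.mem_compl_iff, MvPolynomial.mem_zeroLocus_iff, not_forall]
          exact ⟨p, hpu, hp0⟩
  · rintro ⟨I, rfl⟩
    exact TopologicalSpace.isOpen_generateFrom_of_mem ⟨I, rfl⟩


theorem zar_isClosed_iff {σ : Type*} {A : Set (σ → K)} :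
    IsClosed A ↔ ∃ I : Ideal (MvPolynomial σ K), A = MvPolynomial.zeroLocus K I := by
  rw [← isOpen_compl_iff, zar_isOpen_iff]
  constructor
  · rintro ⟨I, hI⟩
    exact ⟨I, by rw [← compl_compl A, hI, compl_compl]⟩
  · rintro ⟨I, rfl⟩
    exact ⟨I, rfl⟩

theorem eval_bind₁_eq {σ τ : Type*} (x : σ → K) (p : τ → MvPolynomial σ K)
    (q : MvPolynomial τ K) :
    MvPolynomial.eval x (MvPolynomial.bind₁ p q) =
      MvPolynomial.eval (fun j => MvPolynomial.eval x (p j)) q := by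
  have h := MvPolynomial.aeval_bind₁ (S := K) x p q
  exact h

theorem continuous_polymap {σ τ : Type*} (p : τ → MvPolynomial σ K) :
    Continuous (fun (x : σ → K) (j : τ) => MvPolynomial.eval x (p j)) := by
  rw [continuous_def]
  intro U hU
  rw [zar_isOpen_iff] at hU
  obtain ⟨I, rfl⟩ := hU
  rw [Set.preimage_compl, isOpen_compl_iff, zar_isClosed_iff]
  refine ⟨Ideal.span ((MvPolynomial.bind₁ p) '' I), ?_⟩
  ext x
  rw [MvPolynomial.zeroLocus_span]
  simp only [Set.mem_preimage, MvPolynomial.mem_zeroLocus_iff, Set.mem_setOf_eq, Set.mem_image,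
    MvPolynomial.aeval_eq_eval]
  constructor
  · rintro h q ⟨r, hr, rfl⟩
    rw [eval_bind₁_eq]
    exact h r hr
  · intro h r hr
    have := h _ ⟨r, hr, rfl⟩
    rwa [eval_bind₁_eq] at this

section Geometry

variable {G} (X : Set (Fin m → K)) [MulAction G ↥X]

/-- The graph map `x ↦ (x, σ x)` into the ambient doubled affine space. -/
def gmap (σ : G) (x : ↥X) : (Fin m ⊕ Fin m) → K :=
  Sum.elim (x : Fin m → K) ((σ • x : ↥X) : Fin m → K)

/-- The graph `H_σ` of `σ` as a subset of the ambient doubled affine space. -/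
def HH (σ : G) : Set ((Fin m ⊕ Fin m) → K) := Set.range (gmap X σ)

variable {X}

theorem gmap_injective (σ : G) : Function.Injective (gmap X σ) := by
  intro x y h
  ext i
  exact congrFun h (Sum.inl i)

theorem gmap_inj_pt {σ τ : G} {x y : ↥X} (h : gmap X σ x = gmap X τ y) : x = y := by
  ext i
  exact congrFun h (Sum.inl i)

theorem gmap_eq_iff {σ τ : G} {x : ↥X} : gmap X σ x = gmap X τ x ↔ σ • x = τ • x := by
  constructor
  · intro h
    ext i
    exact congrFun h (Sum.inr i)
  · intro h
    unfold gmap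
    rw [h]

theorem continuous_gmap (hact : IsRegularAction G X) (σ : G) : Continuous (gmap X σ) := by
  have h : ∀ i, ∃ p : MvPolynomial (Fin m) K,
      ∀ x : ↥X, ((σ • x : ↥X) : Fin m → K) i = MvPolynomial.eval (x : Fin m → K) p := hact σ
  choose P hP using h
  have : gmap X σ = (fun (v : Fin m → K) (j : Fin m ⊕ Fin m) =>
      MvPolynomial.eval v (Sum.elim (fun i => MvPolynomial.X i) P j)) ∘ Subtype.val := by
    funext x j
    cases j with
    | inl i => simp [gmap]
    | inr i => simp [gmap, hP i x]
  rw [this]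
  exact (continuous_polymap _).comp continuous_subtype_val

theorem continuous_fst_proj :
    Continuous (fun z : (Fin m ⊕ Fin m) → K => z ∘ Sum.inl) := by
  have : (fun z : (Fin m ⊕ Fin m) → K => z ∘ Sum.inl) =
      fun z (i : Fin m) => MvPolynomial.eval z (MvPolynomial.X (Sum.inl i)) := by
    funext z i; simp
  rw [this]
  exact continuous_polymap _

theorem continuous_snd_proj :
    Continuous (fun z : (Fin m ⊕ Fin m) → K => z ∘ Sum.inr) := by
  have : (fun z : (Fin m ⊕ Fin m) → K => z ∘ Sum.inr) =
      fun z (i : Fin m) => MvPolynomial.eval z (MvPolynomial.X (Sum.inr i)) := by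
    funext z i; simp
  rw [this]
  exact continuous_polymap _

theorem isClosed_eval_zero {σ' : Type*} (q : MvPolynomial σ' K) :
    IsClosed {z : σ' → K | MvPolynomial.eval z q = 0} := by
  rw [zar_isClosed_iff]
  refine ⟨Ideal.span {q}, ?_⟩
  rw [MvPolynomial.zeroLocus_span]
  ext z
  simp

theorem isClosed_HH (hX : IsClosed X) (hact : IsRegularAction G X) (σ : G) :
    IsClosed (HH X σ) := by
  have h : ∀ i, ∃ p : MvPolynomial (Fin m) K,
      ∀ x : ↥X, ((σ • x : ↥X) : Fin m → K) i = MvPolynomial.eval (x : Fin m → K) p := hact σ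
  choose P hP using h
  have heq : HH X σ = ((fun z : (Fin m ⊕ Fin m) → K => z ∘ Sum.inl) ⁻¹' X) ∩
      ⋂ i : Fin m, {z | MvPolynomial.eval z
        (MvPolynomial.X (Sum.inr i) - MvPolynomial.rename Sum.inl (P i)) = 0} := by
    ext z
    constructor
    · rintro ⟨x, rfl⟩
      refine ⟨x.2, ?_⟩
      simp only [Set.mem_iInter, Set.mem_setOf_eq]
      intro i
      rw [map_sub, MvPolynomial.eval_X, MvPolynomial.eval_rename]
      have : (gmap X σ x) ∘ Sum.inl = (x : Fin m → K) := rfl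
      rw [this, ← hP i x]
      have : gmap X σ x (Sum.inr i) = ((σ • x : ↥X) : Fin m → K) i := rfl
      rw [this, sub_self]
    · rintro ⟨hz1, hz2⟩
      simp only [Set.mem_iInter, Set.mem_setOf_eq] at hz2
      refine ⟨⟨z ∘ Sum.inl, hz1⟩, ?_⟩
      funext j
      cases j with
      | inl i => rfl
      | inr i =>
          have := hz2 i
          rw [map_sub, MvPolynomial.eval_X, MvPolynomial.eval_rename, sub_eq_zero] at this
          have h2 := (hP i ⟨z ∘ Sum.inl, hz1⟩).symm
          exact (this.trans h2).symm
  rw [heq]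
  exact (hX.preimage continuous_fst_proj).inter (isClosed_iInter fun i => isClosed_eval_zero _)

end Geometry

section Separation

variable {G} {X : Set (Fin m → K)} [MulAction G ↥X]

theorem exists_sep_poly_pair {s t : Fin m → K} (hst : s ≠ t) :
    ∃ p : MvPolynomial (Fin m) K, MvPolynomial.eval s p = 0 ∧ MvPolynomial.eval t p = 1 := by
  obtain ⟨i, hi⟩ := Function.ne_iff.mp hst
  refine ⟨MvPolynomial.C (t i - s i)⁻¹ * (MvPolynomial.X i - MvPolynomial.C (s i)), ?_, ?_⟩
  · simp
  · simp only [map_mul, map_sub, MvPolynomial.eval_C, MvPolynomial.eval_X]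
    rw [inv_mul_cancel₀ (sub_ne_zero.mpr (Ne.symm hi))]

theorem exists_sep_poly (S T : Finset (Fin m → K)) (hST : ∀ s ∈ S, ∀ t ∈ T, s ≠ t) :
    ∃ q : MvPolynomial (Fin m) K, (∀ s ∈ S, MvPolynomial.eval s q = 0) ∧
      (∀ t ∈ T, MvPolynomial.eval t q = 1) := by
  classical
  have hpair : ∀ s t : Fin m → K, ∃ p : MvPolynomial (Fin m) K,
      s ≠ t → (MvPolynomial.eval s p = 0 ∧ MvPolynomial.eval t p = 1) := by
    intro s t
    by_cases h : s = t
    · exact ⟨0, fun h' => absurd h h'⟩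
    · obtain ⟨p, h1, h2⟩ := exists_sep_poly_pair h
      exact ⟨p, fun _ => ⟨h1, h2⟩⟩
  choose ℓ hℓ using hpair
  set qt : (Fin m → K) → MvPolynomial (Fin m) K := fun t => ∏ s ∈ S, ℓ s t with hqt
  have hqt0 : ∀ t ∈ T, ∀ s' ∈ S, MvPolynomial.eval s' (qt t) = 0 := by
    intro t ht s' hs'
    rw [hqt]
    simp only [map_prod]
    exact Finset.prod_eq_zero hs' ((hℓ s' t (hST s' hs' t ht)).1)
  have hqt1 : ∀ t ∈ T, MvPolynomial.eval t (qt t) = 1 := by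
    intro t ht
    rw [hqt]
    simp only [map_prod]
    exact Finset.prod_eq_one fun s hs => (hℓ s t (hST s hs t ht)).2
  refine ⟨1 - ∏ t ∈ T, (1 - qt t), ?_, ?_⟩
  · intro s hs
    simp only [map_sub, map_one, map_prod]
    rw [Finset.prod_congr rfl (fun t ht => by rw [hqt0 t ht s hs, sub_zero])]
    simp
  · intro t ht
    simp only [map_sub, map_one, map_prod]
    rw [Finset.prod_eq_zero ht (by rw [hqt1 t ht, sub_self])]
    simp

theorem exists_invariant_sep [Finite G] (hact : IsRegularAction G X) {x y : ↥X}
    (h : ∀ σ : G, σ • x ≠ y) :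
    ∃ f : ↥X → K, IsRegularFn X f ∧ IsInvariantFn G X f ∧ f x ≠ f y := by
  classical
  have : Fintype G := Fintype.ofFinite G
  set S : Finset (Fin m → K) :=
    Finset.image (fun σ : G => ((σ • x : ↥X) : Fin m → K)) Finset.univ with hS
  set T : Finset (Fin m → K) :=
    Finset.image (fun σ : G => ((σ • y : ↥X) : Fin m → K)) Finset.univ with hT
  have hST : ∀ s ∈ S, ∀ t ∈ T, s ≠ t := by
    intro s hs t ht hst
    rw [hS] at hs
    rw [hT] at ht
    simp only [Finset.mem_image, Finset.mem_univ, true_and] at hs ht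
    obtain ⟨σ, rfl⟩ := hs
    obtain ⟨τ, rfl⟩ := ht
    have hxy : σ • x = τ • y := Subtype.ext hst
    exact h (τ⁻¹ * σ) (by rw [mul_smul, hxy, inv_smul_smul])
  obtain ⟨q, hq0, hq1⟩ := exists_sep_poly S T hST
  have hreg : ∀ (σ : G) (i : Fin m), ∃ p : MvPolynomial (Fin m) K,
      ∀ z : ↥X, ((σ • z : ↥X) : Fin m → K) i = MvPolynomial.eval (z : Fin m → K) p :=
    fun σ i => hact σ i
  choose P hP using hreg
  set p : MvPolynomial (Fin m) K := ∏ σ : G, MvPolynomial.bind₁ (P σ) q with hp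
  have key : ∀ z : ↥X, MvPolynomial.eval (z : Fin m → K) p =
      ∏ σ : G, MvPolynomial.eval (((σ • z : ↥X)) : Fin m → K) q := by
    intro z
    rw [hp, map_prod]
    refine Finset.prod_congr rfl fun σ _ => ?_
    rw [eval_bind₁_eq]
    have hfz : (fun j => MvPolynomial.eval (z : Fin m → K) (P σ j)) =
        ((σ • z : ↥X) : Fin m → K) := by
      funext i
      exact (hP σ i z).symm
    rw [hfz]
  refine ⟨fun z => MvPolynomial.eval (z : Fin m → K) p, ⟨p, fun _ => rfl⟩, ?_, ?_⟩
  · intro τ z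
    dsimp only
    rw [key, key]
    have := Equiv.prod_comp (Equiv.mulRight τ)
      (fun σ : G => MvPolynomial.eval (((σ • z : ↥X)) : Fin m → K) q)
    rw [← this]
    refine Finset.prod_congr rfl fun σ _ => ?_
    congr 2
    simp only [Equiv.coe_mulRight]
    rw [mul_smul]
  · dsimp only
    rw [key x, key y]
    have h1 : ∀ σ : G, MvPolynomial.eval (((σ • y : ↥X)) : Fin m → K) q = 1 := by
      intro σ
      refine hq1 _ ?_
      rw [hT]
      simp only [Finset.mem_image, Finset.mem_univ, true_and]
      exact ⟨σ, rfl⟩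
    rw [Finset.prod_congr rfl fun σ _ => h1 σ, Finset.prod_const_one]
    rw [Finset.prod_eq_zero (Finset.mem_univ (1 : G)) (hq0 _ (by
      rw [hS]
      simp only [Finset.mem_image, Finset.mem_univ, true_and]
      exact ⟨1, rfl⟩))]
    exact zero_ne_one

theorem sep_eq_iUnion [Finite G] (hact : IsRegularAction G X) :
    sepVariety G X = ⋃ σ : G, HH X σ := by
  ext z
  constructor
  · rintro ⟨x, y, rfl, hsep⟩
    have : ∃ σ : G, σ • x = y := by
      by_contra hcon
      push_neg at hcon
      obtain ⟨f, hreg, hinv, hne⟩ := exists_invariant_sep hact hcon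
      exact hne (hsep f hreg hinv)
    obtain ⟨σ, rfl⟩ := this
    exact Set.mem_iUnion.mpr ⟨σ, ⟨x, rfl⟩⟩
  · intro hz
    obtain ⟨σ, x, rfl⟩ := Set.mem_iUnion.mp hz
    exact ⟨x, σ • x, rfl, fun f _ hinv => (hinv σ x).symm⟩

theorem HH_subset_sep [Finite G] (hact : IsRegularAction G X) (σ : G) :
    HH X σ ⊆ sepVariety G X := by
  rw [sep_eq_iUnion hact]
  exact Set.subset_iUnion (fun σ : G => HH X σ) σ

theorem isClosed_sep [Finite G] (hX : IsClosed X) (hact : IsRegularAction G X) :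
    IsClosed (sepVariety G X) := by
  rw [sep_eq_iUnion hact]
  exact isClosed_iUnion_of_finite fun σ => isClosed_HH hX hact σ

end Separation

section Poset

theorem irred_subset_of_closed_cover {γ : Type*} [TopologicalSpace γ] {S : Set γ}
    (hS : IsIrreducible S) {ι : Type*} [Finite ι] {C : ι → Set γ} (hC : ∀ i, IsClosed (C i))
    (h : S ⊆ ⋃ i, C i) : ∃ i, S ⊆ C i := by
  classical
  have : Fintype ι := Fintype.ofFinite ι
  have key : ∀ s : Finset ι, S ⊆ ⋃ i ∈ s, C i → ∃ i, S ⊆ C i := by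
    intro s
    induction s using Finset.induction_on with
    | empty =>
        intro hsub
        obtain ⟨x, hx⟩ := hS.1
        simp only [Finset.notMem_empty, Set.iUnion_of_empty, Set.iUnion_empty,
          Set.subset_empty_iff] at hsub
        rw [hsub] at hx
        exact absurd hx (Set.notMem_empty x)
    | @insert a s _ ih =>
        intro hsub
        rw [Finset.set_biUnion_insert] at hsub
        by_cases h1 : S ⊆ C a
        · exact ⟨a, h1⟩
        by_cases h2 : S ⊆ ⋃ i ∈ s, C i
        · exact ih h2
        exfalso
        obtain ⟨x1, hx1S, hx1⟩ := Set.not_subset.mp h1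
        obtain ⟨x2, hx2S, hx2⟩ := Set.not_subset.mp h2
        have hne := hS.2 (C a)ᶜ (⋃ i ∈ s, C i)ᶜ (hC a).isOpen_compl
          (Set.Finite.isClosed_biUnion s.finite_toSet (fun i _ => hC i)).isOpen_compl
          ⟨x1, hx1S, hx1⟩ ⟨x2, hx2S, hx2⟩
        obtain ⟨x, hxS, hxa, hxs⟩ := hne
        rcases hsub hxS with hx | hx
        · exact hxa hx
        · exact hxs hx
  apply key Finset.univ
  intro x hx
  obtain ⟨i, hi⟩ := Set.mem_iUnion.mp (h hx)
  exact Set.mem_biUnion (Finset.mem_univ i) hi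

/-- Push an irreducible closed subset forward along a continuous closed map. -/
noncomputable def pushIC {γ δ : Type*} [TopologicalSpace γ] [TopologicalSpace δ] (f : γ → δ)
    (hf : Continuous f) (hcl : ∀ s : Set γ, IsClosed s → IsClosed (f '' s))
    (Z : IrreducibleCloseds γ) : IrreducibleCloseds δ where
  carrier := f '' (Z : Set γ)
  isIrreducible' := Z.isIrreducible.image f hf.continuousOn
  isClosed' := hcl _ Z.isClosed

theorem coe_pushIC {γ δ : Type*} [TopologicalSpace γ] [TopologicalSpace δ] (f : γ → δ)
    (hf : Continuous f) (hcl : ∀ s : Set γ, IsClosed s → IsClosed (f '' s))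
    (Z : IrreducibleCloseds γ) : (pushIC f hf hcl Z : Set δ) = f '' (Z : Set γ) := rfl

theorem strictMono_pushIC {γ δ : Type*} [TopologicalSpace γ] [TopologicalSpace δ] {f : γ → δ}
    (hf : Continuous f) (hcl : ∀ s : Set γ, IsClosed s → IsClosed (f '' s))
    (hinj : Function.Injective f) : StrictMono (pushIC f hf hcl) := by
  intro Z W h
  rw [lt_iff_le_and_ne] at h ⊢
  refine ⟨fun z hz => ?_, fun heq => h.2 ?_⟩
  · obtain ⟨x, hx, rfl⟩ := hz
    exact ⟨x, h.1 hx, rfl⟩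
  · apply SetLike.coe_injective
    have := congrArg (fun W : IrreducibleCloseds δ => (W : Set δ)) heq
    simp only [coe_pushIC] at this
    exact Set.image_injective.mpr hinj this

theorem coheight_le_pushIC {γ δ : Type*} [TopologicalSpace γ] [TopologicalSpace δ] {f : γ → δ}
    (hf : Continuous f) (hcl : ∀ s : Set γ, IsClosed s → IsClosed (f '' s))
    (hinj : Function.Injective f) (Z : IrreducibleCloseds γ) :
    Order.coheight Z ≤ Order.coheight (pushIC f hf hcl Z) :=
  Order.coheight_le_coheight_apply_of_strictMono _ (strictMono_pushIC hf hcl hinj) Z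

theorem lt_codimIn_iff {γ : Type*} [TopologicalSpace γ] {Y A : Set γ} {k : ℕ∞} (hk : k ≠ ⊤) :
    k < codimIn Y A ↔
      ∀ Z : IrreducibleCloseds ↥Y, (Z : Set ↥Y) ⊆ Subtype.val ⁻¹' A → k < Order.coheight Z := by
  constructor
  · intro h Z hZ
    exact lt_of_lt_of_le h (iInf₂_le Z hZ)
  · intro h
    have h2 : k + 1 ≤ codimIn Y A :=
      le_iInf₂ fun Z hZ => (ENat.add_one_le_iff hk).mpr (h Z hZ)
    exact lt_of_lt_of_le ((ENat.add_one_le_iff hk).mp le_rfl) h2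

theorem codimIn_le {γ : Type*} [TopologicalSpace γ] {Y A : Set γ}
    (Z : IrreducibleCloseds ↥Y) (hZ : (Z : Set ↥Y) ⊆ Subtype.val ⁻¹' A) :
    codimIn Y A ≤ Order.coheight Z :=
  iInf₂_le Z hZ

theorem exists_of_codimIn_le {γ : Type*} [TopologicalSpace γ] {Y A : Set γ} {k : ℕ∞} (hk : k ≠ ⊤)
    (h : codimIn Y A ≤ k) :
    ∃ Z : IrreducibleCloseds ↥Y, (Z : Set ↥Y) ⊆ Subtype.val ⁻¹' A ∧ Order.coheight Z ≤ k := by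
  by_contra hcon
  push_neg at hcon
  have := (lt_codimIn_iff hk).mpr fun Z hZ => hcon Z hZ
  exact absurd h (not_le.mpr this)

end Poset

section VMachinery

variable {G} {X : Set (Fin m → K)} [MulAction G ↥X]

theorem gmap_mem_sep (σ : G) (x : ↥X) : gmap X σ x ∈ sepVariety G X :=
  ⟨x, σ • x, rfl, fun f _ hinv => (hinv σ x).symm⟩

theorem sep_sub_union [Finite G] (hact : IsRegularAction G X) {v : (Fin m ⊕ Fin m) → K}
    (hv : v ∈ sepVariety G X) : ∃ σ : G, v ∈ HH X σ := by
  rw [sep_eq_iUnion hact] at hv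
  exact Set.mem_iUnion.mp hv

/-- The inclusion of `X` into the separating variety as the graph of `σ`. -/
def Γmap (σ : G) (x : ↥X) : ↥(sepVariety G X) := ⟨gmap X σ x, gmap_mem_sep σ x⟩

/-- Projection from the separating variety back to `X`. -/
def Δmap (v : ↥(sepVariety G X)) : ↥X := by
  refine ⟨(v : (Fin m ⊕ Fin m) → K) ∘ Sum.inl, ?_⟩
  obtain ⟨x, y, he, -⟩ := v.2
  rw [he]
  have : Sum.elim (x : Fin m → K) (y : Fin m → K) ∘ Sum.inl = (x : Fin m → K) := rfl
  rw [this]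
  exact x.2

theorem Δ_Γ (σ : G) (x : ↥X) : Δmap (Γmap σ x) = x :=
  Subtype.ext (funext fun _ => rfl)

theorem Γmap_injective (σ : G) : Function.Injective (Γmap (X := X) σ) := by
  intro x y h
  exact gmap_inj_pt (congrArg Subtype.val h)

theorem continuous_Γmap (hact : IsRegularAction G X) (σ : G) :
    Continuous (Γmap (X := X) σ) :=
  (continuous_gmap hact σ).subtype_mk _

theorem continuous_Δmap : Continuous (Δmap (G := G) (X := X)) :=
  (continuous_fst_proj.comp continuous_subtype_val).subtype_mk _

theorem gmap_Δ {σ : G} {v : ↥(sepVariety G X)} (h : (v : (Fin m ⊕ Fin m) → K) ∈ HH X σ) :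
    gmap X σ (Δmap v) = (v : (Fin m ⊕ Fin m) → K) := by
  obtain ⟨x, hx⟩ := h
  have hΔ : Δmap v = x := by
    apply Subtype.ext
    have : (Δmap v : Fin m → K) = (v : (Fin m ⊕ Fin m) → K) ∘ Sum.inl := rfl
    rw [this, ← hx]
    rfl
  rw [hΔ, hx]

theorem Γmap_image_closed (hX : IsClosed X) (hact : IsRegularAction G X) (σ : G)
    {s : Set ↥X} (hs : IsClosed s) : IsClosed (Γmap (X := X) σ '' s) := by
  obtain ⟨D, hD, hDeq⟩ := isClosed_induced_iff.mp hs
  have heq : Γmap (X := X) σ '' s =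
      Subtype.val ⁻¹' (HH X σ ∩ ((fun z : (Fin m ⊕ Fin m) → K => z ∘ Sum.inl) ⁻¹' D)) := by
    ext v
    constructor
    · rintro ⟨x, hx, rfl⟩
      refine ⟨⟨x, rfl⟩, ?_⟩
      have : gmap X σ x ∘ Sum.inl = (x : Fin m → K) := rfl
      simp only [Set.mem_preimage]
      show gmap X σ x ∘ Sum.inl ∈ D
      rw [this]
      rw [← hDeq] at hx
      exact hx
    · rintro ⟨⟨x, hx⟩, hD2⟩
      refine ⟨x, ?_, ?_⟩
      · rw [← hDeq]
        simp only [Set.mem_preimage]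
        have : (x : Fin m → K) = (v : (Fin m ⊕ Fin m) → K) ∘ Sum.inl := by rw [← hx]; rfl
        rw [this]
        exact hD2
      · exact Subtype.ext hx
  rw [heq]
  exact ((isClosed_HH hX hact σ).inter (hD.preimage continuous_fst_proj)).preimage
    continuous_subtype_val

/-- Pushforward of irreducible closeds along the graph embedding. -/
noncomputable def pushG (hX : IsClosed X) (hact : IsRegularAction G X) (σ : G) :
    IrreducibleCloseds ↥X → IrreducibleCloseds ↥(sepVariety G X) :=
  pushIC (Γmap σ) (continuous_Γmap hact σ) (fun _ hs => Γmap_image_closed hX hact σ hs)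

theorem coe_pushG (hX : IsClosed X) (hact : IsRegularAction G X) (σ : G)
    (Z : IrreducibleCloseds ↥X) :
    (pushG hX hact σ Z : Set ↥(sepVariety G X)) = Γmap σ '' (Z : Set ↥X) := rfl

theorem coheight_le_pushG (hX : IsClosed X) (hact : IsRegularAction G X) (σ : G)
    (Z : IrreducibleCloseds ↥X) :
    Order.coheight Z ≤ Order.coheight (pushG hX hact σ Z) :=
  coheight_le_pushIC _ _ (Γmap_injective σ) Z

/-- The set of points of the separating variety lying on the graph `H_σ`. -/
theorem injOn_Δmap (σ : G) :
    Set.InjOn (Δmap (G := G) (X := X))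
      {v : ↥(sepVariety G X) | (v : (Fin m ⊕ Fin m) → K) ∈ HH X σ} := by
  intro v hv w hw h
  apply Subtype.ext
  rw [← gmap_Δ hv, ← gmap_Δ hw, h]

theorem isClosed_Δmap_image (hact : IsRegularAction G X) {σ : G}
    {Z : Set ↥(sepVariety G X)} (hZcl : IsClosed Z)
    (h : ∀ v ∈ Z, (v : (Fin m ⊕ Fin m) → K) ∈ HH X σ) :
    IsClosed (Δmap (G := G) (X := X) '' Z) := by
  obtain ⟨D, hD, hDeq⟩ := isClosed_induced_iff.mp hZcl
  have heq : Δmap (G := G) (X := X) '' Z = (gmap X σ) ⁻¹' D := by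
    ext x
    constructor
    · rintro ⟨v, hv, rfl⟩
      have hval := gmap_Δ (h v hv)
      simp only [Set.mem_preimage]
      rw [hval]
      rw [← hDeq] at hv
      exact hv
    · intro hx
      refine ⟨⟨gmap X σ x, gmap_mem_sep σ x⟩, ?_, ?_⟩
      · rw [← hDeq]
        exact hx
      · exact Subtype.ext (funext fun _ => rfl)
  rw [heq]
  exact hD.preimage (continuous_gmap hact σ)

/-- Pull an irreducible closed subset of the separating variety lying over a single graph
back to `X`. -/
noncomputable def pullIC (hact : IsRegularAction G X) {σ : G}
    (Z : IrreducibleCloseds ↥(sepVariety G X))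
    (h : ∀ v ∈ (Z : Set ↥(sepVariety G X)), (v : (Fin m ⊕ Fin m) → K) ∈ HH X σ) :
    IrreducibleCloseds ↥X where
  carrier := Δmap '' (Z : Set ↥(sepVariety G X))
  isIrreducible' := Z.isIrreducible.image _ continuous_Δmap.continuousOn
  isClosed' := isClosed_Δmap_image hact Z.isClosed h

theorem coe_pullIC (hact : IsRegularAction G X) {σ : G}
    (Z : IrreducibleCloseds ↥(sepVariety G X))
    (h : ∀ v ∈ (Z : Set ↥(sepVariety G X)), (v : (Fin m ⊕ Fin m) → K) ∈ HH X σ) :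
    (pullIC hact Z h : Set ↥X) = Δmap '' (Z : Set ↥(sepVariety G X)) := rfl

theorem pushG_pullIC (hX : IsClosed X) (hact : IsRegularAction G X) {σ : G}
    (Z : IrreducibleCloseds ↥(sepVariety G X))
    (h : ∀ v ∈ (Z : Set ↥(sepVariety G X)), (v : (Fin m ⊕ Fin m) → K) ∈ HH X σ) :
    pushG hX hact σ (pullIC hact Z h) = Z := by
  apply SetLike.coe_injective
  rw [coe_pushG, coe_pullIC, Set.image_image]
  apply Set.eq_of_subset_of_subset
  · rintro _ ⟨v, hv, rfl⟩
    have heq2 : Γmap σ (Δmap v) = v := Subtype.ext (gmap_Δ (h v hv))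
    show Γmap σ (Δmap v) ∈ (Z : Set ↥(sepVariety G X))
    rw [heq2]
    exact hv
  · intro v hv
    refine ⟨v, hv, Subtype.ext (gmap_Δ (h v hv))⟩

theorem pullIC_pushG (hX : IsClosed X) (hact : IsRegularAction G X) {σ : G}
    (Z' : IrreducibleCloseds ↥X)
    (h : ∀ v ∈ (pushG hX hact σ Z' : Set ↥(sepVariety G X)),
      (v : (Fin m ⊕ Fin m) → K) ∈ HH X σ) :
    pullIC hact (pushG hX hact σ Z') h = Z' := by
  apply SetLike.coe_injective
  rw [coe_pullIC, coe_pushG, Set.image_image]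
  simp only [Δ_Γ, Set.image_id']

theorem mem_HH_of_pushG (hX : IsClosed X) (hact : IsRegularAction G X) (σ : G)
    (Z' : IrreducibleCloseds ↥X) :
    ∀ v ∈ (pushG hX hact σ Z' : Set ↥(sepVariety G X)),
      (v : (Fin m ⊕ Fin m) → K) ∈ HH X σ := by
  rintro v ⟨x, -, rfl⟩
  exact ⟨x, rfl⟩

theorem coheight_pushG_le [Finite G] (hX : IsClosed X) (hact : IsRegularAction G X) (σ : G)
    (Z' : IrreducibleCloseds ↥X) :
    Order.coheight (pushG hX hact σ Z') ≤ Order.coheight Z' := by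
  apply Order.coheight_le
  intro p hp
  have hlast : IsIrreducible (Subtype.val '' (p.last : Set ↥(sepVariety G X))) :=
    (p.last).isIrreducible.image _ continuous_subtype_val.continuousOn
  have hcover : Subtype.val '' (p.last : Set ↥(sepVariety G X)) ⊆ ⋃ τ : G, HH X τ := by
    rintro _ ⟨v, hv, rfl⟩
    rw [← sep_eq_iUnion hact]
    exact v.2
  obtain ⟨ρ, hρ⟩ := irred_subset_of_closed_cover hlast (fun τ => isClosed_HH hX hact τ) hcover
  have hall : ∀ i, ∀ v ∈ (p i : Set ↥(sepVariety G X)), (v : (Fin m ⊕ Fin m) → K) ∈ HH X ρ := by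
    intro i v hv
    apply hρ
    refine ⟨v, ?_, rfl⟩
    have hle : p i ≤ p.last := p.monotone (Fin.le_last i)
    exact hle hv
  have hstep' : ∀ i : Fin p.length,
      (fun i => pullIC hact (p i) (hall i)) i.castSucc < (fun i => pullIC hact (p i) (hall i)) i.succ := by
    intro i
    have hstep := p.step i
    have hsub : (p i.castSucc : Set ↥(sepVariety G X)) ⊂ (p i.succ : Set ↥(sepVariety G X)) :=
      SetLike.coe_ssubset_coe.mpr hstep
    have hP : ∀ j, (p j : Set ↥(sepVariety G X)) ⊆
        {v : ↥(sepVariety G X) | (v : (Fin m ⊕ Fin m) → K) ∈ HH X ρ} := fun j v hv => hall j v hv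
    have himg := ((injOn_Δmap (X := X) ρ).image_ssubset_image_iff (hP i.castSucc)
      (hP i.succ)).mpr hsub
    exact SetLike.coe_ssubset_coe.mp himg
  set q : LTSeries (IrreducibleCloseds ↥X) :=
    RelSeries.mk p.length (fun i => pullIC hact (p i) (hall i)) hstep' with hq
  have hhead : Z' ≤ q.head := by
    apply le_of_eq
    apply SetLike.coe_injective
    have h1 : q.head = pullIC hact (p.head) (fun v hv => hall 0 v hv) := rfl
    rw [h1, coe_pullIC, hp, coe_pushG, Set.image_image]
    simp only [Δ_Γ, Set.image_id']
  have := Order.length_le_coheight hhead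
  exact this

end VMachinery

section SmulMachinery

variable {G} {X : Set (Fin m → K)} [MulAction G ↥X]

theorem continuous_smul_subtype (hact : IsRegularAction G X) (σ : G) :
    Continuous (fun x : ↥X => σ • x) := by
  have h : ∀ i, ∃ p : MvPolynomial (Fin m) K,
      ∀ x : ↥X, ((σ • x : ↥X) : Fin m → K) i = MvPolynomial.eval (x : Fin m → K) p := hact σ
  choose P hP using h
  apply Continuous.subtype_mk (f := fun x : ↥X => ((σ • x : ↥X) : Fin m → K))
  have heq : (fun x : ↥X => ((σ • x : ↥X) : Fin m → K)) =
      (fun (v : Fin m → K) (i : Fin m) => MvPolynomial.eval v (P i)) ∘ Subtype.val := by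
    funext x i
    exact hP i x
  rw [heq]
  exact (continuous_polymap _).comp continuous_subtype_val

theorem smul_image_closed (hact : IsRegularAction G X) (σ : G) {s : Set ↥X} (hs : IsClosed s) :
    IsClosed ((fun x : ↥X => σ • x) '' s) := by
  have heq : (fun x : ↥X => σ • x) '' s = (fun x : ↥X => σ⁻¹ • x) ⁻¹' s :=
    congrFun (Set.image_eq_preimage_of_inverse
      (fun x : ↥X => inv_smul_smul σ x) (fun x : ↥X => smul_inv_smul σ x)) s
  rw [heq]
  exact hs.preimage (continuous_smul_subtype hact σ⁻¹)

/-- Pushforward of irreducible closed subsets of `X` along the action of `σ`. -/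
noncomputable def pushS (hact : IsRegularAction G X) (σ : G) :
    IrreducibleCloseds ↥X → IrreducibleCloseds ↥X :=
  pushIC (fun x : ↥X => σ • x) (continuous_smul_subtype hact σ)
    (fun _ hs => smul_image_closed hact σ hs)

theorem coe_pushS (hact : IsRegularAction G X) (σ : G) (Z : IrreducibleCloseds ↥X) :
    (pushS hact σ Z : Set ↥X) = (fun x : ↥X => σ • x) '' (Z : Set ↥X) := rfl

theorem coheight_le_pushS (hact : IsRegularAction G X) (σ : G) (Z : IrreducibleCloseds ↥X) :
    Order.coheight Z ≤ Order.coheight (pushS hact σ Z) :=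
  coheight_le_pushIC _ _ (MulAction.injective σ) Z

theorem pushS_pushS (hact : IsRegularAction G X) (σ : G) (Z : IrreducibleCloseds ↥X) :
    pushS hact σ⁻¹ (pushS hact σ Z) = Z := by
  apply SetLike.coe_injective
  rw [coe_pushS, coe_pushS, Set.image_image]
  simp only [inv_smul_smul, Set.image_id']

theorem coheight_pushS_eq (hact : IsRegularAction G X) (σ : G) (Z : IrreducibleCloseds ↥X) :
    Order.coheight (pushS hact σ Z) = Order.coheight Z := by
  apply le_antisymm
  · have := coheight_le_pushS hact σ⁻¹ (pushS hact σ Z)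
    rwa [pushS_pushS hact σ Z] at this
  · exact coheight_le_pushS hact σ Z

end SmulMachinery

section Fixed

variable {G} {X : Set (Fin m → K)} [MulAction G ↥X]

theorem mem_fixedPts_iff {g : G} {x : ↥X} :
    (x : Fin m → K) ∈ fixedPts G X g ↔ g • x = x := by
  constructor
  · rintro ⟨h, he⟩
    rwa [Subtype.coe_eta] at he
  · intro h
    exact ⟨x.2, by rw [Subtype.coe_eta]; exact h⟩

theorem fixedPts_inv (g : G) : fixedPts G X g⁻¹ = fixedPts G X g := by
  ext v
  constructor
  · rintro ⟨h, he⟩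
    refine ⟨h, ?_⟩
    rw [inv_smul_eq_iff] at he
    exact he.symm
  · rintro ⟨h, he⟩
    refine ⟨h, ?_⟩
    rw [inv_smul_eq_iff]
    exact he.symm

theorem gmap_comp_inl (σ : G) (x : ↥X) : gmap X σ x ∘ Sum.inl = (x : Fin m → K) := rfl

theorem gmap_comp_inr (σ : G) (x : ↥X) :
    gmap X σ x ∘ Sum.inr = ((σ • x : ↥X) : Fin m → K) := rfl

theorem gmap_mem_HH_iff {σ τ : G} {x : ↥X} : gmap X σ x ∈ HH X τ ↔ τ • x = σ • x := by
  constructor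
  · rintro ⟨y, hy⟩
    have hxy : y = x := gmap_inj_pt hy
    subst hxy
    exact (gmap_eq_iff.mp hy.symm).symm
  · intro h
    exact ⟨x, (gmap_eq_iff.mpr h.symm).symm⟩

theorem smul_eq_iff_fixed {σ τ : G} {x : ↥X} : τ • x = σ • x ↔ (σ⁻¹ * τ) • x = x := by
  rw [mul_smul]
  constructor
  · intro h
    rw [h]
    exact inv_smul_smul σ x
  · intro h
    have := congrArg (fun y => σ • y) h
    simpa [smul_inv_smul] using this

theorem isClosed_fixed_subtype (hact : IsRegularAction G X) (g : G) :
    IsClosed (Subtype.val ⁻¹' (fixedPts G X g) : Set ↥X) := by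
  have h : ∀ i, ∃ p : MvPolynomial (Fin m) K,
      ∀ x : ↥X, ((g • x : ↥X) : Fin m → K) i = MvPolynomial.eval (x : Fin m → K) p := hact g
  choose P hP using h
  have heq : (Subtype.val ⁻¹' (fixedPts G X g) : Set ↥X) =
      ⋂ i : Fin m, Subtype.val ⁻¹'
        {v : Fin m → K | MvPolynomial.eval v (P i - MvPolynomial.X i) = 0} := by
    ext x
    simp only [Set.mem_preimage, Set.mem_iInter, Set.mem_setOf_eq, map_sub,
      MvPolynomial.eval_X]
    rw [mem_fixedPts_iff]
    constructor
    · intro h i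
      rw [← hP i x, h, sub_self]
    · intro h
      apply Subtype.ext
      funext i
      have := h i
      rw [← hP i x, sub_eq_zero] at this
      exact this
  rw [heq]
  exact isClosed_iInter fun i => (isClosed_eval_zero _).preimage continuous_subtype_val

/-- An ambient polynomial extension of the graph map `gmap`. -/
noncomputable def gAmb (hact : IsRegularAction G X) (σ : G) (v : Fin m → K) :
    (Fin m ⊕ Fin m) → K :=
  fun j => MvPolynomial.eval v
    (Sum.elim (fun i => MvPolynomial.X i) (fun i => (hact σ i).choose) j)

theorem continuous_gAmb (hact : IsRegularAction G X) (σ : G) : Continuous (gAmb hact σ) :=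
  continuous_polymap _

theorem gAmb_val (hact : IsRegularAction G X) (σ : G) (x : ↥X) :
    gAmb hact σ (x : Fin m → K) = gmap X σ x := by
  funext j
  cases j with
  | inl i => simp [gAmb, gmap]
  | inr i =>
      have := (hact σ i).choose_spec x
      simp only [gAmb, Sum.elim_inr]
      rw [← this]
      rfl

theorem codimIn_empty_gt {γ : Type*} [TopologicalSpace γ] {Y : Set γ} {k : ℕ∞} (hk : k ≠ ⊤) :
    k < codimIn Y (∅ : Set γ) := by
  rw [lt_codimIn_iff hk]
  intro Z hZ
  exfalso
  obtain ⟨x, hx⟩ := Z.isIrreducible.1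
  have := hZ hx
  simp at this

end Fixed

section MainLemmas

variable {G} {X : Set (Fin m → K)} [MulAction G ↥X]

theorem irred_subset_union {γ : Type*} [TopologicalSpace γ] {S C1 C2 : Set γ}
    (hS : IsIrreducible S) (h1 : IsClosed C1) (h2 : IsClosed C2) (h : S ⊆ C1 ∪ C2) :
    S ⊆ C1 ∨ S ⊆ C2 := by
  have hcov : S ⊆ ⋃ b : Bool, (if b then C1 else C2) := by
    intro x hx
    rcases h hx with hx1 | hx2
    · exact Set.mem_iUnion.mpr ⟨true, by simpa using hx1⟩
    · exact Set.mem_iUnion.mpr ⟨false, by simpa using hx2⟩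
  obtain ⟨b, hb⟩ := irred_subset_of_closed_cover hS
    (fun b : Bool => by cases b <;> simpa using (by first | exact h2 | exact h1)) hcov
  cases b
  · exact Or.inr (by simpa using hb)
  · exact Or.inl (by simpa using hb)

theorem exists_HH_of_IC [Finite G] (hX : IsClosed X) (hact : IsRegularAction G X)
    (Z : IrreducibleCloseds ↥(sepVariety G X)) :
    ∃ σ : G, ∀ v ∈ (Z : Set ↥(sepVariety G X)), (v : (Fin m ⊕ Fin m) → K) ∈ HH X σ := by
  have hirr : IsIrreducible (Subtype.val '' (Z : Set ↥(sepVariety G X))) :=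
    Z.isIrreducible.image _ continuous_subtype_val.continuousOn
  have hcov : Subtype.val '' (Z : Set ↥(sepVariety G X)) ⊆ ⋃ τ : G, HH X τ := by
    rintro _ ⟨v, hv, rfl⟩
    rw [← sep_eq_iUnion hact]
    exact v.2
  obtain ⟨σ, hσ⟩ := irred_subset_of_closed_cover hirr (fun τ => isClosed_HH hX hact τ) hcov
  exact ⟨σ, fun v hv => hσ ⟨v, hv, rfl⟩⟩

theorem coheight_pullIC_le (hX : IsClosed X) (hact : IsRegularAction G X) {σ : G}
    (Z : IrreducibleCloseds ↥(sepVariety G X))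
    (hmem : ∀ v ∈ (Z : Set ↥(sepVariety G X)), (v : (Fin m ⊕ Fin m) → K) ∈ HH X σ) :
    Order.coheight (pullIC hact Z hmem) ≤ Order.coheight Z := by
  have h := coheight_le_pushG hX hact σ (pullIC hact Z hmem)
  rwa [pushG_pullIC hX hact Z hmem] at h

theorem forward_conn [Finite G] (hX : IsClosed X) (hact : IsRegularAction G X) {k : ℕ}
    (hV : ConnectedInCodim (sepVariety G X) (k : ℕ∞)) : ConnectedInCodim X (k : ℕ∞) := by
  intro A hA hcodim
  have hk : (k : ℕ∞) ≠ ⊤ := by exact_mod_cast WithTop.coe_ne_top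
  set Bamb : Set ((Fin m ⊕ Fin m) → K) :=
    ((fun z : (Fin m ⊕ Fin m) → K => z ∘ Sum.inl) ⁻¹' A) ∪
    ((fun z : (Fin m ⊕ Fin m) → K => z ∘ Sum.inr) ⁻¹' A) with hBdef
  have hBcl : IsClosed Bamb :=
    (hA.preimage continuous_fst_proj).union (hA.preimage continuous_snd_proj)
  have hcodimB : (k : ℕ∞) < codimIn (sepVariety G X) Bamb := by
    rw [lt_codimIn_iff hk]
    intro Z hZ
    obtain ⟨σ, hmem⟩ := exists_HH_of_IC hX hact Z
    set Z' := pullIC hact Z hmem with hZ'def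
    have h1 : Order.coheight Z' ≤ Order.coheight Z := coheight_pullIC_le hX hact Z hmem
    have hsplit : (Z' : Set ↥X) ⊆ (Subtype.val ⁻¹' A) ∪
        ((fun x : ↥X => σ • x) ⁻¹' (Subtype.val ⁻¹' A)) := by
      rintro x ⟨v, hv, rfl⟩
      have hvB : (v : (Fin m ⊕ Fin m) → K) ∈ Bamb := hZ hv
      rcases hvB with h | h
      · left
        exact h
      · right
        have hval := gmap_Δ (hmem v hv)
        simp only [Set.mem_preimage]
        have heq2 : ((σ • Δmap v : ↥X) : Fin m → K) = (v : (Fin m ⊕ Fin m) → K) ∘ Sum.inr := by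
          rw [← hval]
          rfl
        rw [heq2]
        exact h
    have hcl1 : IsClosed (Subtype.val ⁻¹' A : Set ↥X) := hA.preimage continuous_subtype_val
    have hcl2 : IsClosed ((fun x : ↥X => σ • x) ⁻¹' (Subtype.val ⁻¹' A)) :=
      hcl1.preimage (continuous_smul_subtype hact σ)
    rcases irred_subset_union Z'.isIrreducible hcl1 hcl2 hsplit with hc | hc
    · exact lt_of_lt_of_le (lt_of_lt_of_le hcodim (codimIn_le Z' hc)) h1
    · have hc' : ((pushS hact σ Z' : Set ↥X)) ⊆ Subtype.val ⁻¹' A := by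
        rintro _ ⟨x, hx, rfl⟩
        exact hc hx
      have h2 : (k : ℕ∞) < Order.coheight (pushS hact σ Z') :=
        lt_of_lt_of_le hcodim (codimIn_le _ hc')
      rw [coheight_pushS_eq hact σ Z'] at h2
      exact lt_of_lt_of_le h2 h1
  have hVconn := hV Bamb hBcl hcodimB
  have himg : (fun z : (Fin m ⊕ Fin m) → K => z ∘ Sum.inl) '' (sepVariety G X \ Bamb) =
      X \ A := by
    ext w
    constructor
    · rintro ⟨z, ⟨hzV, hzB⟩, rfl⟩
      obtain ⟨σ, hσ⟩ := sep_sub_union hact hzV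
      obtain ⟨x, rfl⟩ := hσ
      show gmap X σ x ∘ Sum.inl ∈ X \ A
      rw [gmap_comp_inl]
      refine ⟨x.2, fun hwA => hzB (Or.inl ?_)⟩
      simp only [Set.mem_preimage]
      rw [gmap_comp_inl]
      exact hwA
    · rintro ⟨hwX, hwA⟩
      refine ⟨gmap X 1 ⟨w, hwX⟩, ⟨gmap_mem_sep 1 ⟨w, hwX⟩, ?_⟩, gmap_comp_inl 1 ⟨w, hwX⟩⟩
      rintro (h | h)
      · apply hwA
        simp only [Set.mem_preimage] at h
        rw [gmap_comp_inl] at h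
        exact h
      · apply hwA
        simp only [Set.mem_preimage] at h
        rw [gmap_comp_inr, one_smul] at h
        exact h
  rw [← himg]
  exact hVconn.image _ continuous_fst_proj.continuousOn

end MainLemmas

section ForwardGen

variable {G} {X : Set (Fin m → K)} [MulAction G ↥X]

theorem forward_gen [Finite G] (hX : IsClosed X) (hact : IsRegularAction G X) {k : ℕ}
    (hV : ConnectedInCodim (sepVariety G X) (k : ℕ∞)) :
    Subgroup.closure {σ : G | codimIn X (fixedPts G X σ) ≤ (k : ℕ∞)} = ⊤ := by
  classical
  have hk : (k : ℕ∞) ≠ ⊤ := by exact_mod_cast WithTop.coe_ne_top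
  set S : Set G := {σ : G | codimIn X (fixedPts G X σ) ≤ (k : ℕ∞)} with hSdef
  set N : Subgroup G := Subgroup.closure S with hNdef
  by_contra hne
  obtain ⟨σ0, hσ0⟩ : ∃ σ0 : G, σ0 ∉ N := by
    by_contra hcon
    push_neg at hcon
    exact hne ((Subgroup.eq_top_iff' N).mpr hcon)
  -- X is nonempty
  have hVne := hV ∅ isClosed_empty (codimIn_empty_gt hk)
  rw [Set.diff_empty] at hVne
  obtain ⟨z0, hz0⟩ := hVne.1
  obtain ⟨xX, -, -, -⟩ := hz0
  have hXne : Nonempty ↥X := ⟨xX⟩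
  -- the bad set B
  set S0 : Set (G × G) := {pq : G × G | pq.1⁻¹ * pq.2 ∉ N} with hS0def
  set B : Set ((Fin m ⊕ Fin m) → K) := ⋃ pq ∈ S0, (HH X pq.1 ∩ HH X pq.2) with hBdef
  have hBcl : IsClosed B :=
    Set.Finite.isClosed_biUnion (Set.toFinite S0)
      (fun pq _ => (isClosed_HH hX hact pq.1).inter (isClosed_HH hX hact pq.2))
  have hcodimB : (k : ℕ∞) < codimIn (sepVariety G X) B := by
    rw [lt_codimIn_iff hk]
    intro Z hZ
    have hirr : IsIrreducible (Subtype.val '' (Z : Set ↥(sepVariety G X))) :=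
      Z.isIrreducible.image _ continuous_subtype_val.continuousOn
    have hcov : Subtype.val '' (Z : Set ↥(sepVariety G X)) ⊆
        ⋃ i : ↥S0, (HH X i.1.1 ∩ HH X i.1.2) := by
      rintro _ ⟨v, hv, rfl⟩
      have hvB := hZ hv
      rw [Set.mem_preimage, hBdef, Set.mem_iUnion₂] at hvB
      obtain ⟨pq, hpq, hm⟩ := hvB
      exact Set.mem_iUnion.mpr ⟨⟨pq, hpq⟩, hm⟩
    obtain ⟨⟨⟨σ, τ⟩, hστ⟩, hsub⟩ := irred_subset_of_closed_cover hirr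
      (fun i : ↥S0 => (isClosed_HH hX hact i.1.1).inter (isClosed_HH hX hact i.1.2)) hcov
    have hmemσ : ∀ v ∈ (Z : Set ↥(sepVariety G X)), (v : (Fin m ⊕ Fin m) → K) ∈ HH X σ :=
      fun v hv => (hsub ⟨v, hv, rfl⟩).1
    set Z' := pullIC hact Z hmemσ with hZ'def
    have h1 : Order.coheight Z' ≤ Order.coheight Z := coheight_pullIC_le hX hact Z hmemσ
    have hfix : (Z' : Set ↥X) ⊆ Subtype.val ⁻¹' (fixedPts G X (σ⁻¹ * τ)) := by
      rintro x ⟨v, hv, rfl⟩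
      have hHτ : (v : (Fin m ⊕ Fin m) → K) ∈ HH X τ := (hsub ⟨v, hv, rfl⟩).2
      have hval := gmap_Δ (hmemσ v hv)
      rw [← hval] at hHτ
      rw [gmap_mem_HH_iff] at hHτ
      rw [smul_eq_iff_fixed] at hHτ
      simp only [Set.mem_preimage]
      exact mem_fixedPts_iff.mpr hHτ
    have hgt : (k : ℕ∞) < codimIn X (fixedPts G X (σ⁻¹ * τ)) := by
      rw [← not_le]
      intro hle
      exact hστ (Subgroup.subset_closure hle)
    exact lt_of_lt_of_le (lt_of_lt_of_le hgt (codimIn_le Z' hfix)) h1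
  have hVB := hV B hBcl hcodimB
  -- point avoiding all bad fixed loci
  have hx0 : ∃ x : ↥X, ∀ g : G, g ∉ N → (x : Fin m → K) ∉ fixedPts G X g := by
    by_contra hcon
    push_neg at hcon
    set W := irreducibleComponent (Classical.arbitrary ↥X) with hWdef
    have hWirr : IsIrreducible W := isIrreducible_irreducibleComponent
    have hWsub : W ⊆ ⋃ g : {g : G // g ∉ N}, Subtype.val ⁻¹' (fixedPts G X g.1) := by
      intro x hx
      obtain ⟨g, hg, hfix⟩ := hcon x
      exact Set.mem_iUnion.mpr ⟨⟨g, hg⟩, hfix⟩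
    obtain ⟨⟨g, hg⟩, hWg⟩ := irred_subset_of_closed_cover hWirr
      (fun g : {g : G // g ∉ N} => isClosed_fixed_subtype hact g.1) hWsub
    set Wic : IrreducibleCloseds ↥X := ⟨W, hWirr, isClosed_irreducibleComponent⟩ with hWicdef
    have hmax : IsMax Wic := by
      intro W' hW'
      have : (W' : Set ↥X) = W :=
        eq_irreducibleComponent W'.isIrreducible.2 hW'
      exact le_of_eq (SetLike.coe_injective this.symm).symm
    have hch : Order.coheight Wic = 0 := Order.coheight_eq_zero.mpr hmax
    have hcodim0 : codimIn X (fixedPts G X g) ≤ (k : ℕ∞) := by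
      calc codimIn X (fixedPts G X g) ≤ Order.coheight Wic := codimIn_le Wic hWg
        _ = 0 := hch
        _ ≤ (k : ℕ∞) := zero_le
    exact hg (Subgroup.subset_closure hcodim0)
  obtain ⟨x0, hx0⟩ := hx0
  -- fixed-point extraction from pairs of graphs
  have hfixpair : ∀ (p q : G) (x : ↥X), gmap X p x ∈ HH X q → (p⁻¹ * q) • x = x := by
    intro p q x h
    rw [gmap_mem_HH_iff] at h
    exact smul_eq_iff_fixed.mp h
  -- disconnect
  set E1 : Set ((Fin m ⊕ Fin m) → K) := ⋃ σ : {σ : G // σ ∈ N}, HH X σ.1 with hE1def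
  set E2 : Set ((Fin m ⊕ Fin m) → K) := ⋃ σ : {σ : G // σ ∉ N}, HH X σ.1 with hE2def
  have hE1cl : IsClosed E1 := isClosed_iUnion_of_finite fun σ => isClosed_HH hX hact σ.1
  have hE2cl : IsClosed E2 := isClosed_iUnion_of_finite fun σ => isClosed_HH hX hact σ.1
  have hnotB : ∀ ρ : G, gmap X ρ x0 ∉ B := by
    intro ρ hmem
    rw [hBdef, Set.mem_iUnion₂] at hmem
    obtain ⟨⟨p, q⟩, hpq, h1, h2⟩ := hmem
    have e1 : (ρ⁻¹ * p) • x0 = x0 := hfixpair ρ p x0 h1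
    have e2 : (ρ⁻¹ * q) • x0 = x0 := hfixpair ρ q x0 h2
    have e1' : (p⁻¹ * ρ) • x0 = x0 := by
      have h' := congrArg (fun y : ↥X => (p⁻¹ * ρ) • y) e1
      rw [smul_smul] at h'
      have hee : (p⁻¹ * ρ) * (ρ⁻¹ * p) = 1 := by group
      rw [hee, one_smul] at h'
      exact h'.symm
    have e3 : (p⁻¹ * q) • x0 = x0 := by
      have hsplit : (p⁻¹ * q) • x0 = (p⁻¹ * ρ) • ((ρ⁻¹ * q) • x0) := by
        rw [smul_smul]
        congr 1
        group
      rw [hsplit, e2, e1']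
    exact hx0 (p⁻¹ * q) hpq (mem_fixedPts_iff.mpr e3)
  have hT1 : ((sepVariety G X \ B) ∩ E1).Nonempty :=
    ⟨gmap X 1 x0, ⟨gmap_mem_sep 1 x0, hnotB 1⟩,
      Set.mem_iUnion.mpr ⟨⟨1, one_mem N⟩, x0, rfl⟩⟩
  have hT2 : ((sepVariety G X \ B) ∩ E2).Nonempty :=
    ⟨gmap X σ0 x0, ⟨gmap_mem_sep σ0 x0, hnotB σ0⟩,
      Set.mem_iUnion.mpr ⟨⟨σ0, hσ0⟩, x0, rfl⟩⟩
  have hcover : sepVariety G X \ B ⊆ E1 ∪ E2 := by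
    intro z hz
    obtain ⟨σ, hσ⟩ := sep_sub_union hact hz.1
    by_cases h : σ ∈ N
    · exact Or.inl (Set.mem_iUnion.mpr ⟨⟨σ, h⟩, hσ⟩)
    · exact Or.inr (Set.mem_iUnion.mpr ⟨⟨σ, h⟩, hσ⟩)
  have hpc := hVB.2
  rw [isPreconnected_closed_iff] at hpc
  obtain ⟨w, hws, hw1, hw2⟩ := hpc E1 E2 hE1cl hE2cl hcover hT1 hT2
  obtain ⟨⟨σ, hσN⟩, x, rfl⟩ := Set.mem_iUnion.mp hw1
  obtain ⟨⟨τ, hτN⟩, hwτ⟩ := Set.mem_iUnion.mp hw2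
  have hστN : σ⁻¹ * τ ∉ N := by
    intro hmem2
    apply hτN
    have hτeq : τ = σ * (σ⁻¹ * τ) := by group
    rw [hτeq]
    exact mul_mem hσN hmem2
  exact hws.2 (Set.mem_biUnion (show ((σ, τ) : G × G) ∈ S0 from hστN) ⟨⟨x, rfl⟩, hwτ⟩)

end ForwardGen

section Backward

variable {G} {X : Set (Fin m → K)} [MulAction G ↥X]

theorem backward [Finite G] (hX : IsClosed X) (hact : IsRegularAction G X) {k : ℕ}
    (hXconn : ConnectedInCodim X (k : ℕ∞))
    (hgen : Subgroup.closure {σ : G | codimIn X (fixedPts G X σ) ≤ (k : ℕ∞)} = ⊤) :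
    ConnectedInCodim (sepVariety G X) (k : ℕ∞) := by
  classical
  intro B hB hcodimB
  have hk : (k : ℕ∞) ≠ ⊤ := by exact_mod_cast WithTop.coe_ne_top
  set S : Set G := {σ : G | codimIn X (fixedPts G X σ) ≤ (k : ℕ∞)} with hSdef
  set A : G → Set (Fin m → K) := fun σ => gAmb hact σ ⁻¹' B with hAdef
  have hAcl : ∀ σ, IsClosed (A σ) := fun σ => hB.preimage (continuous_gAmb hact σ)
  have hAcodim : ∀ σ, (k : ℕ∞) < codimIn X (A σ) := by
    intro σ
    rw [lt_codimIn_iff hk]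
    intro Z' hZ'
    have hsub : (pushG hX hact σ Z' : Set ↥(sepVariety G X)) ⊆ Subtype.val ⁻¹' B := by
      rintro _ ⟨x, hx, rfl⟩
      have hcoe : (Γmap σ x : ↥(sepVariety G X)).val = gAmb hact σ (x : Fin m → K) :=
        (gAmb_val hact σ x).symm
      simp only [Set.mem_preimage]
      rw [hcoe]
      exact hZ' hx
    exact lt_of_lt_of_le ((lt_codimIn_iff hk).mp hcodimB _ hsub)
      (coheight_pushG_le hX hact σ Z')
  have hXA : ∀ σ, IsConnected (X \ A σ) := fun σ => hXconn (A σ) (hAcl σ) (hAcodim σ)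
  have hpiece : ∀ σ : G, gAmb hact σ '' (X \ A σ) = HH X σ \ B := by
    intro σ
    ext w
    constructor
    · rintro ⟨v, ⟨hvX, hvA⟩, rfl⟩
      refine ⟨?_, hvA⟩
      rw [show v = ((⟨v, hvX⟩ : ↥X) : Fin m → K) from rfl, gAmb_val hact σ ⟨v, hvX⟩]
      exact ⟨⟨v, hvX⟩, rfl⟩
    · rintro ⟨⟨x, rfl⟩, hwB⟩
      refine ⟨(x : Fin m → K), ⟨x.2, ?_⟩, gAmb_val hact σ x⟩
      simp only [hAdef, Set.mem_preimage]
      rw [gAmb_val hact σ x]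
      exact hwB
  have hHHconn : ∀ σ, IsConnected (HH X σ \ B) := fun σ =>
    hpiece σ ▸ (hXA σ).image _ (continuous_gAmb hact σ).continuousOn
  set T := sepVariety G X \ B with hTdef
  have hsubT : ∀ σ, HH X σ \ B ⊆ T := fun σ w hw => ⟨HH_subset_sep hact σ hw.1, hw.2⟩
  obtain ⟨pt, hpt⟩ := (hHHconn 1).1
  have hptT : pt ∈ T := hsubT 1 hpt
  have main : ∀ l : List G, (∀ a ∈ l, a ∈ S ∪ S⁻¹) →
      HH X l.prod \ B ⊆ connectedComponentIn T pt := by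
    intro l
    induction l using List.reverseRecOn with
    | nil =>
        intro _
        simp only [List.prod_nil]
        exact (hHHconn 1).2.subset_connectedComponentIn hpt (hsubT 1)
    | append_singleton l a ih =>
        intro hmem
        have hl : ∀ b ∈ l, b ∈ S ∪ S⁻¹ := fun b hb => hmem b (List.mem_append_left _ hb)
        have ha : a ∈ S ∪ S⁻¹ := hmem a (List.mem_append_right _ (List.mem_singleton_self a))
        have hih := ih hl
        have hprod : (l ++ [a]).prod = l.prod * a := by
          rw [List.prod_append, List.prod_cons, List.prod_nil, mul_one]
        rw [hprod]
        set σ := l.prod with hσdef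
        have hfixcodim : codimIn X (fixedPts G X a) ≤ (k : ℕ∞) := by
          rcases ha with h | h
          · exact h
          · have h' : a⁻¹ ∈ S := Set.mem_inv.mp h
            rw [hSdef, Set.mem_setOf_eq, fixedPts_inv] at h'
            exact h'
        obtain ⟨Z0, hZ0sub, hZ0codim⟩ := exists_of_codimIn_le hk hfixcodim
        have hnotsub : ¬ ((Z0 : Set ↥X) ⊆ Subtype.val ⁻¹' (A σ)) := by
          intro hsub
          have h2 := lt_of_lt_of_le (hAcodim σ) (codimIn_le Z0 hsub)
          exact absurd hZ0codim (not_le.mpr h2)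
        obtain ⟨x, hxZ0, hxA⟩ := Set.not_subset.mp hnotsub
        have hafix : a • x = x := mem_fixedPts_iff.mp (hZ0sub hxZ0)
        have hwB : gmap X σ x ∉ B := by
          intro hw
          apply hxA
          simp only [Set.mem_preimage, hAdef]
          rw [gAmb_val hact σ x]
          exact hw
        have hwσ : gmap X σ x ∈ HH X σ \ B := ⟨⟨x, rfl⟩, hwB⟩
        have hwστ : gmap X σ x ∈ HH X (σ * a) \ B := by
          refine ⟨?_, hwB⟩
          rw [gmap_mem_HH_iff, mul_smul, hafix]
        have hwcomp : gmap X σ x ∈ connectedComponentIn T pt := hih hwσ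
        have hfin := (hHHconn (σ * a)).2.subset_connectedComponentIn hwστ (hsubT (σ * a))
        rw [← connectedComponentIn_eq hwcomp] at hfin
        exact hfin
  have hcover : T ⊆ connectedComponentIn T pt := by
    intro z hz
    obtain ⟨σ, hσ⟩ := sep_sub_union hact hz.1
    have hσtop : σ ∈ Subgroup.closure S := by rw [hgen]; exact Subgroup.mem_top σ
    have hσmon : σ ∈ Submonoid.closure (S ∪ S⁻¹) := by
      rw [← Subgroup.closure_toSubmonoid]
      exact hσtop
    obtain ⟨l, hl, hlprod⟩ := Submonoid.exists_list_of_mem_closure hσmon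
    refine main l hl ?_
    rw [hlprod]
    exact ⟨hσ, hz.2⟩
  refine ⟨⟨pt, hptT⟩, ?_⟩
  have hTeq : T = connectedComponentIn T pt :=
    subset_antisymm hcover (connectedComponentIn_subset T pt)
  show IsPreconnected T
  rw [hTeq]
  exact isPreconnected_connectedComponentIn

end Backward

end SepAux

/-- The separating variety is connected in codimension `k` if and only if `X`
is connected in codimension `k` and `G` is generated by `k`-reflections. -/
theorem sepVariety_connectedInCodim_iff {K : Type*} [Field K] [IsAlgClosed K] {m : ℕ}
    (X : Set (Fin m → K)) (hX : IsClosed X)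
    (G : Type*) [Group G] [Finite G] [MulAction G ↥X] (hact : IsRegularAction G X)
    (k : ℕ) :
    ConnectedInCodim (sepVariety G X) (k : ℕ∞) ↔
      (ConnectedInCodim X (k : ℕ∞) ∧
        Subgroup.closure {σ : G | codimIn X (fixedPts G X σ) ≤ (k : ℕ∞)} = ⊤) := by
  constructor
  · intro hV
    exact ⟨SepAux.forward_conn hX hact hV, SepAux.forward_gen hX hact hV⟩
  · rintro ⟨h1, h2⟩
    exact SepAux.backward hX hact h1 h2
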